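/- Let q ∈ (1/2, 1) and p ∈ Δ_2 with p_1 > p_2. Writing p(n) = G^n(p), we have p_1(n+1) − p_2(n+1) = (p_1(n) − p_2(n))(1 + (2q−1)p_3(n)) for every n; consequently the sequence (p_1(n) − p_2(n))_{n≥1} is strictly increasing and the sequence (p_3(n))_{n≥1} converges to zero. -/

import Mathlib

open Filter Topology

/-- The map G = (G₁,G₂,G₃) on ℝ³ (with parameter q):
G₁(x) = x₁² + 2q x₁ x₃, G₂(x) = x₂² + 2q x₂ x₃,
G₃(x) = x₃² + 2 x₁ x₂ + 2(1−q) x₁ x₃ + 2(1−q) x₂ x₃. -/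
noncomputable def Gmap (q : ℝ) (x : ℝ × ℝ × ℝ) : ℝ × ℝ × ℝ :=
  (x.1 ^ 2 + 2 * q * x.1 * x.2.2,
   x.2.1 ^ 2 + 2 * q * x.2.1 * x.2.2,
   x.2.2 ^ 2 + 2 * x.1 * x.2.1 + 2 * (1 - q) * x.1 * x.2.2
     + 2 * (1 - q) * x.2.1 * x.2.2)

/-- The open simplex Δ₂ ⊆ ℝ³. -/
def simplex2 : Set (ℝ × ℝ × ℝ) :=
  {p | p.1 + p.2.1 + p.2.2 = 1 ∧ 0 < p.1 ∧ 0 < p.2.1 ∧ 0 < p.2.2}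

lemma Gmap_step (q : ℝ) (hq1 : 1 / 2 < q) (hq2 : q < 1) (x : ℝ × ℝ × ℝ)
    (hx : x ∈ simplex2) : Gmap q x ∈ simplex2 ∧
    (Gmap q x).1 - (Gmap q x).2.1
      = (x.1 - x.2.1) * (1 + (2 * q - 1) * x.2.2) := by
  obtain ⟨hs, h1, h2, h3⟩ := hx
  have hq0 : (0:ℝ) < q := by linarith
  have hq1' : (0:ℝ) < 1 - q := by linarith
  constructor
  · refine ⟨by simp only [Gmap]; nlinarith [sq_nonneg (x.1 + x.2.1 + x.2.2)], ?_, ?_, ?_⟩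
    · simp only [Gmap]
      nlinarith [mul_pos h1 h3, sq_nonneg x.1, mul_pos (mul_pos hq0 h1) h3]
    · simp only [Gmap]
      nlinarith [mul_pos h2 h3, sq_nonneg x.2.1, mul_pos (mul_pos hq0 h2) h3]
    · simp only [Gmap]
      nlinarith [mul_pos h1 h2, sq_nonneg x.2.2, mul_pos (mul_pos hq1' h1) h3,
        mul_pos (mul_pos hq1' h2) h3]
  · simp only [Gmap]; nlinarith

/-- For q > 1/2 and p ∈ Δ₂ with p₁ > p₂, writing p(n) = G^n(p):
p₁(n+1) − p₂(n+1) = (p₁(n) − p₂(n)) (1 + (2q−1) p₃(n)) for every n;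
consequently p₁(n) − p₂(n) is strictly increasing and p₃(n) → 0. -/
theorem difference_recursion_and_consequences (q : ℝ) (hq1 : 1 / 2 < q)
    (hq2 : q < 1) (p : ℝ × ℝ × ℝ) (hp : p ∈ simplex2) (h12 : p.2.1 < p.1) :
    (∀ n : ℕ, ((Gmap q)^[n + 1] p).1 - ((Gmap q)^[n + 1] p).2.1
      = (((Gmap q)^[n] p).1 - ((Gmap q)^[n] p).2.1)
        * (1 + (2 * q - 1) * ((Gmap q)^[n] p).2.2)) ∧
    StrictMono (fun n => ((Gmap q)^[n] p).1 - ((Gmap q)^[n] p).2.1) ∧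
    Tendsto (fun n => ((Gmap q)^[n] p).2.2) atTop (𝓝 0) := by
  have hq : (0:ℝ) < 2 * q - 1 := by linarith
  -- invariance along the orbit
  have inv : ∀ n : ℕ, (Gmap q)^[n] p ∈ simplex2 := by
    intro n
    induction n with
    | zero => simpa using hp
    | succ n ih =>
      rw [Function.iterate_succ_apply']
      exact (Gmap_step q hq1 hq2 _ ih).1
  have hrec : ∀ n : ℕ, ((Gmap q)^[n + 1] p).1 - ((Gmap q)^[n + 1] p).2.1
      = (((Gmap q)^[n] p).1 - ((Gmap q)^[n] p).2.1)
        * (1 + (2 * q - 1) * ((Gmap q)^[n] p).2.2) := by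
    intro n
    rw [Function.iterate_succ_apply']
    exact (Gmap_step q hq1 hq2 _ (inv n)).2
  set d : ℕ → ℝ := fun n => ((Gmap q)^[n] p).1 - ((Gmap q)^[n] p).2.1 with hd
  have dpos : ∀ n, 0 < d n := by
    intro n
    induction n with
    | zero => simpa [hd] using sub_pos.mpr h12
    | succ n ih =>
      have h3 := (inv n).2.2.2
      have := hrec n
      have hfac : (0:ℝ) < 1 + (2 * q - 1) * ((Gmap q)^[n] p).2.2 := by nlinarith
      have hdn : d (n + 1) = d n * (1 + (2 * q - 1) * ((Gmap q)^[n] p).2.2) := this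
      rw [hdn]
      exact mul_pos ih hfac
  have hlt : ∀ n, d n < d (n + 1) := by
    intro n
    have h3 := (inv n).2.2.2
    have hr := hrec n
    have : d (n + 1) = d n * (1 + (2 * q - 1) * ((Gmap q)^[n] p).2.2) := hr
    rw [this]
    nlinarith [dpos n, mul_pos (dpos n) (mul_pos hq h3)]
  have hsm : StrictMono d := strictMono_nat_of_lt_succ hlt
  refine ⟨hrec, hsm, ?_⟩
  -- d is bounded above by 1
  have hbd : ∀ n, d n ≤ 1 := by
    intro n
    obtain ⟨hs, h1, h2, h3⟩ := inv n
    simp only [hd]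
    linarith
  have hbdd : BddAbove (Set.range d) := ⟨1, by rintro _ ⟨n, rfl⟩; exact hbd n⟩
  have hL : Tendsto d atTop (𝓝 (⨆ n, d n)) :=
    tendsto_atTop_ciSup hsm.monotone hbdd
  set L : ℝ := ⨆ n, d n with hLdef
  have hLpos : 0 < L := lt_of_lt_of_le (dpos 0) (le_ciSup hbdd 0)
  have hshift : Tendsto (fun n => d (n + 1)) atTop (𝓝 L) :=
    hL.comp (tendsto_add_atTop_nat 1)
  have hden : Tendsto (fun n => d n * (2 * q - 1)) atTop (𝓝 (L * (2 * q - 1))) :=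
    hL.mul_const _
  have hdenne : L * (2 * q - 1) ≠ 0 := by positivity
  have hnum : Tendsto (fun n => d (n + 1) - d n) atTop (𝓝 0) := by
    have := hshift.sub hL
    simpa using this
  have hquot : Tendsto (fun n => (d (n + 1) - d n) / (d n * (2 * q - 1)))
      atTop (𝓝 0) := by
    have := hnum.div hden hdenne
    simpa only [zero_div, Pi.div_def] using this
  refine hquot.congr ?_
  intro n
  have hr := hrec n
  have hdn := (dpos n).ne'
  have hne : d n * (2 * q - 1) ≠ 0 := by positivity
  field_simp
  linear_combination hr
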